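/- For all x, x̂ ∈ X, u, û ∈ U, and μ, μ̂ ∈ 𝒫(X), the lifted transition kernel satisfies ‖P(·|x,u,μ) − P(·|x̂,û,μ̂)‖₁ ≤ K1 (1_{x≠x̂} + ‖u − û‖₁ + ‖μ − μ̂‖₁). (Proposition 2, kernel part.) -/

import Mathlib

namespace MFG

open Finset

def IsProb {E : Type*} [Fintype E] (μ : E → ℝ) : Prop :=
  (∀ e, 0 ≤ μ e) ∧ ∑ e, μ e = 1

def l1 {E : Type*} [Fintype E] (μ ν : E → ℝ) : ℝ :=
  ∑ e, |μ e - ν e|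

def ind {E : Type*} [DecidableEq E] (x y : E) : ℝ :=
  if x = y then 0 else 1

def RewardLip {X A : Type*} [Fintype X] [Fintype A] [DecidableEq X] [DecidableEq A]
    (r : X → A → (X → ℝ) → ℝ) (L1 : ℝ) : Prop :=
  ∀ x x' a a' μ μ', IsProb μ → IsProb μ' →
    |r x a μ - r x' a' μ'| ≤ L1 * (ind x x' + 2 * ind a a' + l1 μ μ')

def KernelLip {X A : Type*} [Fintype X] [Fintype A] [DecidableEq X] [DecidableEq A]
    (p : X → A → (X → ℝ) → X → ℝ) (K1 : ℝ) : Prop :=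
  ∀ x x' a a' μ μ', IsProb μ → IsProb μ' →
    l1 (p x a μ) (p x' a' μ') ≤ K1 * (ind x x' + 2 * ind a a' + l1 μ μ')

def IsKernel {X A : Type*} [Fintype X] [Fintype A]
    (p : X → A → (X → ℝ) → X → ℝ) : Prop :=
  ∀ x a μ, IsProb μ → IsProb (p x a μ)

def RewardNonneg {X A : Type*} [Fintype X] [Fintype A]
    (r : X → A → (X → ℝ) → ℝ) : Prop :=
  ∀ x a μ, IsProb μ → 0 ≤ r x a μ

def OmegaLip {A : Type*} [Fintype A] (Ω : (A → ℝ) → ℝ) (Lreg : ℝ) : Prop :=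
  ∀ u v, IsProb u → IsProb v → |Ω u - Ω v| ≤ Lreg * l1 u v

def StrongConvex {A : Type*} [Fintype A] (Ω : (A → ℝ) → ℝ)
    (DΩ : (A → ℝ) → (A → ℝ)) (ρ : ℝ) : Prop :=
  ∀ u v, IsProb u → IsProb v →
    Ω u + (∑ a, DΩ u a * (v a - u a)) + ρ / 2 * (l1 u v) ^ 2 ≤ Ω v

noncomputable def Tbell {X A : Type*} [Fintype X] [Fintype A]
    (r : X → A → (X → ℝ) → ℝ) (p : X → A → (X → ℝ) → X → ℝ)
    (Ω : (A → ℝ) → ℝ) (β : ℝ) (μ : X → ℝ) (v : X → ℝ) (x : X) : ℝ :=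
  ⨆ u : {w : A → ℝ // IsProb w},
    ((∑ a, r x a μ * u.1 a) - Ω u.1 + β * ∑ y, v y * (∑ a, p x a μ y * u.1 a))

noncomputable def Qmax {X A : Type*} [Fintype A] (Q : X → (A → ℝ) → ℝ) (y : X) : ℝ :=
  ⨆ u : {w : A → ℝ // IsProb w}, Q y u.1

noncomputable def Lbell {X A : Type*} [Fintype X] [Fintype A]
    (r : X → A → (X → ℝ) → ℝ) (p : X → A → (X → ℝ) → X → ℝ)
    (Ω : (A → ℝ) → ℝ) (β : ℝ) (μ : X → ℝ) (Q : X → (A → ℝ) → ℝ)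
    (x : X) (u : A → ℝ) : ℝ :=
  (∑ a, r x a μ * u a) - Ω u + β * ∑ y, Qmax Q y * (∑ a, p x a μ y * u a)

def BddFixedPoint {X A : Type*} [Fintype X] [Fintype A]
    (r : X → A → (X → ℝ) → ℝ) (p : X → A → (X → ℝ) → X → ℝ)
    (Ω : (A → ℝ) → ℝ) (β : ℝ) (μ : X → ℝ) (Q : X → (A → ℝ) → ℝ) : Prop :=
  (∃ C, ∀ x u, IsProb u → |Q x u| ≤ C) ∧
  (∀ x u, IsProb u → Q x u = Lbell r p Ω β μ Q x u)

/-- Proposition 2, kernel part. -/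
theorem statement1 {X A : Type*} [Fintype X] [Fintype A] [Nonempty X] [Nonempty A]
    [DecidableEq X] [DecidableEq A]
    (p : X → A → (X → ℝ) → X → ℝ) (K1 : ℝ) (hK1 : 0 ≤ K1)
    (hp_prob : IsKernel p) (hp : KernelLip p K1)
    (x x' : X) (u u' : A → ℝ) (hu : IsProb u) (hu' : IsProb u')
    (μ μ' : X → ℝ) (hμ : IsProb μ) (hμ' : IsProb μ') :
    l1 (fun y => ∑ a, p x a μ y * u a) (fun y => ∑ a, p x' a μ' y * u' a) ≤
      K1 * (ind x x' + l1 u u' + l1 μ μ') := by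
  classical
  set q : A → X → ℝ := fun a => p x' a μ' with hq
  set d : A → ℝ := fun a => u a - u' a with hdd
  set dp : A → ℝ := fun a => max (d a) 0 with hdpdef
  set dm : A → ℝ := fun a => max (-(d a)) 0 with hdmdef
  have hdp0 : ∀ a, 0 ≤ dp a := fun a => le_max_right _ _
  have hdm0 : ∀ a, 0 ≤ dm a := fun a => le_max_right _ _
  have hsub : ∀ a, dp a - dm a = d a := fun a => max_zero_sub_max_neg_zero_eq_self (d a)
  have habs : ∀ a, dp a + dm a = |d a| := by
    intro a
    rcases le_total (d a) 0 with h | h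
    · simp [hdpdef, hdmdef, max_eq_right h, max_eq_left (neg_nonneg.mpr h), abs_of_nonpos h]
    · simp [hdpdef, hdmdef, max_eq_left h, max_eq_right (neg_nonpos.mpr h), abs_of_nonneg h]
  have hsumd : ∑ a, d a = 0 := by
    simp only [hdd, Finset.sum_sub_distrib, hu.2, hu'.2, sub_self]
  have hl1uu : l1 u u' = ∑ a, |d a| := rfl
  have hl1nn : 0 ≤ l1 u u' := Finset.sum_nonneg fun a _ => abs_nonneg _
  have hsum_add : ∑ a, dp a + ∑ a, dm a = l1 u u' := by
    rw [hl1uu, ← Finset.sum_add_distrib]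
    exact Finset.sum_congr rfl fun a _ => habs a
  have hsum_sub : ∑ a, dp a - ∑ a, dm a = 0 := by
    rw [← Finset.sum_sub_distrib]
    rw [show ∑ a, (dp a - dm a) = ∑ a, d a from Finset.sum_congr rfl fun a _ => hsub a]
    exact hsumd
  have hdpsum : ∑ a, dp a = l1 u u' / 2 := by linarith
  have hdmsum : ∑ a, dm a = l1 u u' / 2 := by linarith
  -- split into two terms
  have hsplit : l1 (fun y => ∑ a, p x a μ y * u a) (fun y => ∑ a, p x' a μ' y * u' a)
      ≤ (∑ y, |∑ a, (p x a μ y - q a y) * u a|) + ∑ y, |∑ a, q a y * d a| := by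
    unfold l1
    rw [← Finset.sum_add_distrib]
    refine Finset.sum_le_sum fun y _ => ?_
    have hid : (∑ a, p x a μ y * u a) - (∑ a, p x' a μ' y * u' a)
        = (∑ a, (p x a μ y - q a y) * u a) + ∑ a, q a y * d a := by
      rw [← Finset.sum_add_distrib, ← Finset.sum_sub_distrib]
      refine Finset.sum_congr rfl fun a _ => ?_
      simp only [hq, hdd]; ring
    rw [hid]
    exact abs_add_le _ _
  -- first term
  have hT1 : ∑ y, |∑ a, (p x a μ y - q a y) * u a| ≤ K1 * (ind x x' + l1 μ μ') := by
    have step1 : ∑ y, |∑ a, (p x a μ y - q a y) * u a|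
        ≤ ∑ y, ∑ a, |p x a μ y - q a y| * u a := by
      refine Finset.sum_le_sum fun y _ => ?_
      refine (Finset.abs_sum_le_sum_abs _ _).trans ?_
      refine Finset.sum_le_sum fun a _ => ?_
      rw [abs_mul, abs_of_nonneg (hu.1 a)]
    refine step1.trans ?_
    rw [Finset.sum_comm]
    have step2 : ∀ a : A, ∑ y, |p x a μ y - q a y| * u a
        ≤ (K1 * (ind x x' + l1 μ μ')) * u a := by
      intro a
      rw [← Finset.sum_mul]
      refine mul_le_mul_of_nonneg_right ?_ (hu.1 a)
      have := hp x x' a a μ μ' hμ hμ'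
      have hia : ind a a = 0 := by simp [ind]
      rw [hia] at this
      calc (∑ y, |p x a μ y - q a y|) = l1 (p x a μ) (p x' a μ') := rfl
        _ ≤ K1 * (ind x x' + 2 * 0 + l1 μ μ') := this
        _ = K1 * (ind x x' + l1 μ μ') := by ring
    calc ∑ a, ∑ y, |p x a μ y - q a y| * u a
        ≤ ∑ a, (K1 * (ind x x' + l1 μ μ')) * u a :=
          Finset.sum_le_sum fun a _ => step2 a
      _ = K1 * (ind x x' + l1 μ μ') := by rw [← Finset.mul_sum, hu.2, mul_one]
  -- kernel difference bound across actions
  have hqq : ∀ a b : A, ∑ y, |q a y - q b y| ≤ K1 * 2 := by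
    intro a b
    have h := hp x' x' a b μ' μ' hμ' hμ'
    have hx : ind x' x' = 0 := by simp [ind]
    have hmm : l1 μ' μ' = 0 := by simp [l1]
    have hab : ind a b ≤ 1 := by unfold ind; split <;> norm_num
    have hab0 : 0 ≤ ind a b := by unfold ind; split <;> norm_num
    rw [hx, hmm] at h
    calc ∑ y, |q a y - q b y| = l1 (p x' a μ') (p x' b μ') := rfl
      _ ≤ K1 * (0 + 2 * ind a b + 0) := h
      _ ≤ K1 * 2 := by nlinarith
  -- second term
  have hT2 : ∑ y, |∑ a, q a y * d a| ≤ K1 * l1 u u' := by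
    rcases eq_or_lt_of_le hl1nn with hz | hpos
    · have hall : ∀ a, d a = 0 := by
        intro a
        have := (Finset.sum_eq_zero_iff_of_nonneg
          (fun a _ => abs_nonneg (d a))).mp hz.symm a (Finset.mem_univ a)
        exact abs_eq_zero.mp this
      have : ∀ y : X, ∑ a, q a y * d a = 0 := by
        intro y; refine Finset.sum_eq_zero fun a _ => by rw [hall a, mul_zero]
      simp only [this, abs_zero, Finset.sum_const, smul_zero, ← hz, mul_zero]
      exact le_refl 0
    · set m : ℝ := l1 u u' / 2 with hm
      have hmpos : 0 < m := by rw [hm]; linarith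
      have hγ0 : ∀ a b : A, 0 ≤ dp a * dm b / m :=
        fun a b => div_nonneg (mul_nonneg (hdp0 a) (hdm0 b)) hmpos.le
      have key : ∀ y : X, ∑ a, q a y * d a
          = ∑ a, ∑ b, (dp a * dm b / m) * (q a y - q b y) := by
        intro y
        symm
        have e1 : ∀ a : A, ∑ b, (dp a * dm b / m) * (q a y - q b y)
            = (q a y * dp a) * ((∑ b, dm b) / m) - (∑ b, (q b y * dm b) * (dp a / m)) := by
          intro a
          rw [Finset.sum_div, Finset.mul_sum, ← Finset.sum_sub_distrib]
          refine Finset.sum_congr rfl fun b _ => ?_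
          ring
        calc ∑ a, ∑ b, (dp a * dm b / m) * (q a y - q b y)
            = ∑ a, ((q a y * dp a) * ((∑ b, dm b) / m)
                - (∑ b, (q b y * dm b) * (dp a / m))) :=
              Finset.sum_congr rfl fun a _ => e1 a
          _ = (∑ a, q a y * dp a) * ((∑ b, dm b) / m)
                - (∑ b, (q b y * dm b)) * ((∑ a, dp a) / m) := by
              rw [Finset.sum_sub_distrib, ← Finset.sum_mul]
              congr 1
              rw [Finset.sum_comm, Finset.sum_mul]
              refine Finset.sum_congr rfl fun b _ => ?_
              rw [Finset.sum_div, Finset.mul_sum]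
          _ = (∑ a, q a y * dp a) - (∑ b, q b y * dm b) := by
              rw [hdmsum, hdpsum, div_self hmpos.ne', mul_one, mul_one]
          _ = ∑ a, q a y * (dp a - dm a) := by
              rw [← Finset.sum_sub_distrib]
              exact Finset.sum_congr rfl fun a _ => (mul_sub _ _ _).symm
          _ = ∑ a, q a y * d a :=
              Finset.sum_congr rfl fun a _ => by rw [hsub a]
      calc ∑ y, |∑ a, q a y * d a|
          = ∑ y, |∑ a, ∑ b, (dp a * dm b / m) * (q a y - q b y)| := by
            exact Finset.sum_congr rfl fun y _ => by rw [key y]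
        _ ≤ ∑ y, ∑ a, ∑ b, (dp a * dm b / m) * |q a y - q b y| := by
            refine Finset.sum_le_sum fun y _ => ?_
            refine (Finset.abs_sum_le_sum_abs _ _).trans ?_
            refine Finset.sum_le_sum fun a _ => ?_
            refine (Finset.abs_sum_le_sum_abs _ _).trans ?_
            refine Finset.sum_le_sum fun b _ => ?_
            rw [abs_mul, abs_of_nonneg (hγ0 a b)]
        _ = ∑ a, ∑ b, (dp a * dm b / m) * ∑ y, |q a y - q b y| := by
            rw [Finset.sum_comm]
            refine Finset.sum_congr rfl fun a _ => ?_
            rw [Finset.sum_comm]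
            exact Finset.sum_congr rfl fun b _ => (Finset.mul_sum _ _ _).symm
        _ ≤ ∑ a, ∑ b, (dp a * dm b / m) * (K1 * 2) := by
            refine Finset.sum_le_sum fun a _ => Finset.sum_le_sum fun b _ => ?_
            exact mul_le_mul_of_nonneg_left (hqq a b) (hγ0 a b)
        _ = (∑ a, dp a) * ∑ b, dm b * (K1 * 2 / m) := by
            rw [Finset.sum_mul_sum]
            exact Finset.sum_congr rfl fun a _ => Finset.sum_congr rfl fun b _ => by ring
        _ = K1 * l1 u u' := by
            have hl1m : l1 u u' = 2 * m := by rw [hm]; ring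
            rw [← Finset.sum_mul, hdpsum, hdmsum, hl1m]
            field_simp
  calc l1 (fun y => ∑ a, p x a μ y * u a) (fun y => ∑ a, p x' a μ' y * u' a)
      ≤ (∑ y, |∑ a, (p x a μ y - q a y) * u a|) + ∑ y, |∑ a, q a y * d a| := hsplit
    _ ≤ K1 * (ind x x' + l1 μ μ') + K1 * l1 u u' := add_le_add hT1 hT2
    _ = K1 * (ind x x' + l1 u u' + l1 μ μ') := by ring

end MFG
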